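/- Let A = !![a11, a12; a21, a22] be a real 2×2 matrix with Tr(A) < 0, det(A) > 0 and a22 > 0. Let λ > 0 and let d2 satisfy 0 < d2 < a22/λ, and set d1* = (a11·λ·d2 − det(A))/(λ·(λ·d2 − a22)). Suppose ρ : ℝ → ℝ is differentiable at d1*, ρ(d1*) = 0, and for all t in some neighborhood of d1*, ρ(t)² − (Tr(A) − λ·(t + d2))·ρ(t) + det(A − λ·diag(t, d2)) = 0. Then d1* > 0 and ρ'(d1*) = λ·(λ·d2 − a22)/(Tr(A) − λ·(d1* + d2)) > 0. -/

import Mathlib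

open Real Filter

theorem eigenvalue_branch_derivative_positive (a11 a12 a21 a22 lam d2 d1star : ℝ)
    (ρ : ℝ → ℝ)
    (hTr : a11 + a22 < 0) (hDet : 0 < a11 * a22 - a12 * a21) (h22 : 0 < a22)
    (hlam : 0 < lam) (hd2 : 0 < d2) (hd2' : d2 < a22 / lam)
    (hd1star : d1star =
      (a11 * lam * d2 - (a11 * a22 - a12 * a21)) / (lam * (lam * d2 - a22)))
    (hdiff : DifferentiableAt ℝ ρ d1star)
    (hρ0 : ρ d1star = 0)
    (hchar : ∀ᶠ t in nhds d1star,
      ρ t ^ 2 - ((a11 + a22) - lam * (t + d2)) * ρ t +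
        ((a11 - lam * t) * (a22 - lam * d2) - a12 * a21) = 0) :
    0 < d1star ∧
    deriv ρ d1star = lam * (lam * d2 - a22) / ((a11 + a22) - lam * (d1star + d2)) ∧
    0 < deriv ρ d1star := by
  have hld2 : lam * d2 < a22 := by
    have := (lt_div_iff₀ hlam).mp hd2'
    linarith
  have ha11 : a11 < 0 := by linarith
  have hden : lam * (lam * d2 - a22) < 0 :=
    mul_neg_of_pos_of_neg hlam (by linarith)
  have hnum : a11 * lam * d2 - (a11 * a22 - a12 * a21) < 0 := by
    have : a11 * lam * d2 < 0 := by
      have : 0 < lam * d2 := mul_pos hlam hd2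
      nlinarith
    linarith
  have hd1pos : 0 < d1star := by
    rw [hd1star]
    exact div_pos_of_neg_of_neg hnum hden
  have hdenom : (a11 + a22) - lam * (d1star + d2) < 0 := by
    have : 0 < lam * (d1star + d2) := mul_pos hlam (by linarith)
    linarith
  have hdenom' : (a11 + a22) - lam * (d1star + d2) ≠ 0 := ne_of_lt hdenom
  set r := deriv ρ d1star with hr
  have hρ : HasDerivAt ρ r d1star := hdiff.hasDerivAt
  set F : ℝ → ℝ := fun t => ρ t ^ 2 - ((a11 + a22) - lam * (t + d2)) * ρ t +
      ((a11 - lam * t) * (a22 - lam * d2) - a12 * a21) with hF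
  have hg : HasDerivAt (fun t => (a11 + a22) - lam * (t + d2)) (-lam) d1star := by
    have : HasDerivAt (fun t : ℝ => lam * (t + d2)) (lam * 1) d1star :=
      ((hasDerivAt_id d1star).add_const d2).const_mul lam
    simpa using this.const_sub (a11 + a22)
  have hh : HasDerivAt (fun t => (a11 - lam * t) * (a22 - lam * d2) - a12 * a21)
      (-lam * (a22 - lam * d2)) d1star := by
    have h1 : HasDerivAt (fun t : ℝ => a11 - lam * t) (-lam) d1star := by
      simpa using ((hasDerivAt_id d1star).const_mul lam).const_sub a11
    simpa using (h1.mul_const (a22 - lam * d2)).sub_const (a12 * a21)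
  have hFD : HasDerivAt F
      (2 * ρ d1star * r - ((-lam) * ρ d1star +
        ((a11 + a22) - lam * (d1star + d2)) * r) + (-lam) * (a22 - lam * d2)) d1star := by
    have h1 : HasDerivAt (fun t => ρ t ^ 2) (2 * ρ d1star ^ 1 * r) d1star := by
      simpa using hρ.fun_pow 2
    simpa using ((h1.fun_sub (hg.fun_mul hρ)).fun_add hh)
  have hF0 : HasDerivAt F 0 d1star := by
    have : F =ᶠ[nhds d1star] fun _ => (0 : ℝ) := hchar
    exact (hasDerivAt_const d1star (0:ℝ)).congr_of_eventuallyEq this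
  have heq : 2 * ρ d1star * r - ((-lam) * ρ d1star +
        ((a11 + a22) - lam * (d1star + d2)) * r) + (-lam) * (a22 - lam * d2) = 0 :=
    hFD.unique hF0
  rw [hρ0] at heq
  have hderiv : r = lam * (lam * d2 - a22) / ((a11 + a22) - lam * (d1star + d2)) := by
    field_simp
    linarith
  refine ⟨hd1pos, hderiv, ?_⟩
  rw [hderiv]
  exact div_pos_of_neg_of_neg (by nlinarith) hdenom
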